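/- arXiv:2509.02937 — 5 statements merged into one kernel-verified Lean document; each statement's English description precedes it below -/
import Mathlib

section
/- Let p be a positive even integer. There exist real coefficients α_{-p/2}, …, α_{p/2} with α_0 = 0 and α_{-j} = -α_j, and a constant c_p > 0 depending only on p, such that for every dimension d ≥ 1, every vector-valued function h : ℝ → ℝ^d that is p times differentiable whose p-th derivative is C-Lipschitz (with the Euclidean norm on ℝ^d), and every ν > 0, it holds that ‖(1/ν) · Σ_{j=-p/2}^{p/2} α_j h(jν) − h'(0)‖ ≤ c_p · C · ν^p, where the norm is the Euclidean norm on ℝ^d. -/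
open Finset


lemma taylor_lip {E : Type*} [NormedAddCommGroup E] [NormedSpace ℝ E]
    (p : ℕ) (h : ℝ → E) (C : ℝ)
    (hdiff : ∀ k < p, Differentiable ℝ (iteratedDeriv k h))
    (hlip : ∀ u v : ℝ, ‖iteratedDeriv p h u - iteratedDeriv p h v‖ ≤ C * |u - v|) :
    ∀ x : ℝ, ‖h x - ∑ i ∈ range (p+1), (x ^ i / i.factorial) • iteratedDeriv i h 0‖
      ≤ C * |x| ^ (p+1) := by
  induction p generalizing h with
  | zero =>
    intro x
    have := hlip x 0
    simp only [iteratedDeriv_zero, sub_zero] at this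
    simpa using this
  | succ p ih =>
    have hd0 : Differentiable ℝ h := by
      have := hdiff 0 (Nat.succ_pos p); simpa [iteratedDeriv_zero] using this
    have hC : 0 ≤ C := by
      have h1 := hlip 1 0
      have h0 : (0:ℝ) ≤ ‖iteratedDeriv (p+1) h 1 - iteratedDeriv (p+1) h 0‖ := norm_nonneg _
      simp only [sub_zero, abs_one, mul_one] at h1
      linarith
    have ihh := ih (deriv h)
      (fun k hk => by rw [← iteratedDeriv_succ']; exact hdiff (k+1) (by omega))
      (fun u v => by rw [← iteratedDeriv_succ']; exact hlip u v)
    intro x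
    set T : ℕ → E := fun i => iteratedDeriv i h 0 with hT
    set F : ℝ → E := fun y => h y - ∑ i ∈ range (p+2), (y ^ i / i.factorial) • T i with hF
    set G : ℝ → E := fun t => deriv h t - ∑ i ∈ range (p+1), (t ^ i / i.factorial) • T (i+1) with hG
    have hF' : ∀ t : ℝ, HasDerivAt F (G t) t := by
      intro t
      have h1 : HasDerivAt h (deriv h t) t := (hd0 t).hasDerivAt
      have hdecomp : (fun y : ℝ => ∑ i ∈ range (p+2), (y ^ i / i.factorial) • T i)
          = fun y : ℝ => (∑ i ∈ range (p+1), (y ^ (i+1) / (i+1).factorial) • T (i+1))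
              + T 0 := by
        funext y; rw [Finset.sum_range_succ']; norm_num
      have hterm : ∀ i ∈ range (p+1),
          HasDerivAt (fun y : ℝ => (y ^ (i+1) / (i+1).factorial) • T (i+1))
            ((t ^ i / i.factorial) • T (i+1)) t := by
        intro i _
        have hd := ((hasDerivAt_pow (i+1) t).div_const ((i+1).factorial : ℝ)).smul_const (T (i+1))
        have harith : ((i:ℝ)+1) * t ^ (i+1-1) / ((i+1).factorial : ℝ) = t ^ i / (i.factorial : ℝ) := by
          rw [Nat.factorial_succ]
          push_cast
          rw [mul_div_mul_left _ _ (by positivity : (i:ℝ)+1 ≠ 0)]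
        rw [show ((↑(i+1) : ℝ) * t ^ (i+1-1)) = ((i:ℝ)+1) * t ^ (i+1-1) by push_cast; ring] at hd
        rw [harith] at hd
        exact hd
      have h2 : HasDerivAt (fun y : ℝ => ∑ i ∈ range (p+2), (y ^ i / i.factorial) • T i)
          (∑ i ∈ range (p+1), (t ^ i / i.factorial) • T (i+1)) t := by
        rw [hdecomp]
        exact (HasDerivAt.fun_sum hterm).add_const _
      exact h1.sub h2
    have hGb : ∀ t : ℝ, ‖G t‖ ≤ C * |t| ^ (p+1) := by
      intro t
      have := ihh t
      simp only [← iteratedDeriv_succ'] at this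
      exact this
    have hF0 : F 0 = 0 := by
      simp only [hF]
      rw [Finset.sum_eq_single 0]
      · simp [hT]
      · intro i _ hi
        simp [zero_pow hi]
      · simp
    have habs : ∀ t ∈ Set.uIcc (0:ℝ) x, |t| ≤ |x| := by
      intro t ht
      rcases le_total 0 x with hx | hx
      · rw [Set.uIcc_of_le hx] at ht
        rw [abs_of_nonneg ht.1, abs_of_nonneg hx]; exact ht.2
      · rw [Set.uIcc_of_ge hx] at ht
        rw [abs_of_nonpos ht.2, abs_of_nonpos hx]; linarith [ht.1]
    have hmv : ‖F x - F 0‖ ≤ (C * |x| ^ (p+1)) * ‖x - 0‖ := by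
      apply Convex.norm_image_sub_le_of_norm_hasDerivWithin_le
        (fun t ht => (hF' t).hasDerivWithinAt)
        (fun t ht => le_trans (hGb t) (by
          have := habs t ht
          gcongr))
        (convex_uIcc 0 x) (Set.left_mem_uIcc) (Set.right_mem_uIcc)
    rw [hF0, sub_zero] at hmv
    calc ‖F x‖ ≤ C * |x| ^ (p+1) * ‖x - 0‖ := hmv
      _ = C * |x| ^ (p+1+1) := by rw [sub_zero, Real.norm_eq_abs]; ring


lemma exists_coeffs (p : ℕ) (hp : 0 < p) (hpeven : Even p) :
    ∃ α : ℤ → ℝ, α 0 = 0 ∧ (∀ j : ℤ, α (-j) = -α j) ∧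
      ∀ i ≤ p, ∑ j ∈ Finset.Icc (-((p:ℤ)/2)) ((p:ℤ)/2), α j * (j:ℝ)^i
        = if i = 1 then 1 else 0 := by
  obtain ⟨m, hm⟩ := hpeven
  have hm2 : p = 2 * m := by omega
  have hpz : (p:ℤ) = 2 * m := by exact_mod_cast hm2
  have hmz : ((p:ℤ))/2 = (m:ℤ) := by omega
  have hm1 : 1 ≤ m := by omega
  -- nodes
  set v : Fin (p+1) → ℝ := fun k => (k : ℝ) - m with hv
  have hvinj : Function.Injective v := by
    intro a b hab
    simp only [hv] at hab
    have : (a:ℝ) = b := by linarith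
    exact Fin.ext (by exact_mod_cast this)
  set M : Matrix (Fin (p+1)) (Fin (p+1)) ℝ := (Matrix.vandermonde v).transpose with hM
  have hdet : M.det ≠ 0 := by
    rw [hM, Matrix.det_transpose, Matrix.det_vandermonde]
    apply Finset.prod_ne_zero_iff.mpr
    intro a _
    apply Finset.prod_ne_zero_iff.mpr
    intro b hb
    rw [Finset.mem_Ioi] at hb
    exact sub_ne_zero.mpr (fun hEq => absurd (hvinj hEq) (ne_of_gt hb))
  set e1 : Fin (p+1) → ℝ := Pi.single ⟨1, by omega⟩ 1 with he1
  set β : Fin (p+1) → ℝ := M⁻¹.mulVec e1 with hβ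
  have hsolve : M.mulVec β = e1 := by
    rw [hβ, Matrix.mulVec_mulVec, Matrix.mul_nonsing_inv _ (Ne.isUnit hdet), Matrix.one_mulVec]
  -- the index map
  have hidx : ∀ j : ℤ, j ∈ Finset.Icc (-(m:ℤ)) m → (j + m).toNat < p + 1 := by
    intro j hj; rw [Finset.mem_Icc] at hj; omega
  set ι : ℤ → Fin (p+1) := fun j => ⟨(j + m).toNat ⊓ p, by omega⟩ with hι
  set α0 : ℤ → ℝ := fun j => if h : -(m:ℤ) ≤ j ∧ j ≤ m then β (ι j) else 0 with hα0
  -- moments of α0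
  have hmom0 : ∀ i ≤ p, ∑ j ∈ Finset.Icc (-(m:ℤ)) m, α0 j * (j:ℝ)^i
      = if i = 1 then 1 else 0 := by
    intro i hi
    have key : ∑ j ∈ Finset.Icc (-(m:ℤ)) m, α0 j * (j:ℝ)^i
        = ∑ k : Fin (p+1), v k ^ i * β k := by
      apply Finset.sum_nbij' (i := ι) (j := fun k : Fin (p+1) => (k:ℤ) - m)
      · intro j hj; exact Finset.mem_univ _
      · intro k _; rw [Finset.mem_Icc]; have := k.isLt; omega
      · intro j hj
        rw [Finset.mem_Icc] at hj
        simp only [hι]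
        have h1 : (j + (m:ℤ)).toNat ⊓ p = (j + m).toNat := by omega
        simp only [h1]
        omega
      · intro k _; apply Fin.ext; simp only [hι]; have := k.isLt; omega
      · intro j hj
        rw [Finset.mem_Icc] at hj
        have hcond : -(m:ℤ) ≤ j ∧ j ≤ m := hj
        simp only [hα0, dif_pos hcond, hv, hι]
        have h1 : (j + (m:ℤ)).toNat ⊓ p = (j + m).toNat := by omega
        have h2 : (((j + (m:ℤ)).toNat ⊓ p : ℕ) : ℝ) - m = (j : ℝ) := by
          rw [h1]
          have : (((j + (m:ℤ)).toNat : ℤ) : ℝ) = ((j + m : ℤ) : ℝ) := by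
            congr 1; omega
          push_cast at this ⊢
          linarith
        rw [h2]
        ring
    have hsv := congrFun hsolve ⟨i, by omega⟩
    rw [Matrix.mulVec] at hsv
    simp only [hM, Matrix.transpose_apply, Matrix.vandermonde, dotProduct,
      Matrix.of_apply, Fin.val_mk] at hsv
    rw [key, hsv, he1, Pi.single_apply]
    by_cases hie : i = 1
    · subst hie; simp
    · rw [if_neg (by simp [Fin.ext_iff]; omega), if_neg hie]
  -- symmetrize
  set α : ℤ → ℝ := fun j => (α0 j - α0 (-j)) / 2 with hαdef
  have hneg : ∀ f : ℤ → ℝ, ∑ j ∈ Finset.Icc (-(m:ℤ)) m, f (-j) = ∑ j ∈ Finset.Icc (-(m:ℤ)) m, f j := by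
    intro f
    apply Finset.sum_nbij' (i := fun j : ℤ => -j) (j := fun j : ℤ => -j)
    · intro j hj; rw [Finset.mem_Icc] at *; omega
    · intro j hj; rw [Finset.mem_Icc] at *; omega
    · intro j _; ring
    · intro j _; ring
    · intro j _; rfl
  refine ⟨α, by simp [hαdef], fun j => by simp [hαdef]; ring, ?_⟩
  intro i hi
  rw [hmz]
  have expand : ∑ j ∈ Finset.Icc (-(m:ℤ)) m, α j * (j:ℝ)^i
      = (∑ j ∈ Finset.Icc (-(m:ℤ)) m, α0 j * (j:ℝ)^i
         - ∑ j ∈ Finset.Icc (-(m:ℤ)) m, α0 (-j) * (j:ℝ)^i) / 2 := by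
    rw [← Finset.sum_sub_distrib, Finset.sum_div]
    apply Finset.sum_congr rfl
    intro j _
    simp only [hαdef]
    ring
  have hnegsum : ∑ j ∈ Finset.Icc (-(m:ℤ)) m, α0 (-j) * (j:ℝ)^i
      = (-1:ℝ)^i * ∑ j ∈ Finset.Icc (-(m:ℤ)) m, α0 j * (j:ℝ)^i := by
    have h1 := hneg (fun j => α0 (-j) * ((j:ℤ):ℝ)^i)
    rw [← h1, Finset.mul_sum]
    apply Finset.sum_congr rfl
    intro j _
    rw [neg_neg]
    push_cast
    rw [neg_pow]
    ring
  rw [expand, hnegsum, hmom0 i hi]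
  by_cases hie : i = 1
  · subst hie; norm_num
  · rw [if_neg hie]; ring

/-- the p-th order central difference error bound (p even) for
vector-valued functions h : ℝ → ℝ^d under the Euclidean norm, with coefficients
independent of h, ν and d. -/
theorem stmt_5 (p : ℕ) (hp : 0 < p) (hpeven : Even p) :
    ∃ (α : ℤ → ℝ) (c : ℝ), 0 < c ∧ α 0 = 0 ∧
      (∀ j : ℤ, 1 ≤ j → j ≤ (p : ℤ) / 2 → α (-j) = -α j) ∧
      ∀ (d : ℕ), 1 ≤ d →
        ∀ (h : ℝ → EuclideanSpace ℝ (Fin d)) (C : ℝ),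
          (∀ k < p, Differentiable ℝ (iteratedDeriv k h)) →
          (∀ u v : ℝ, ‖iteratedDeriv p h u - iteratedDeriv p h v‖ ≤ C * |u - v|) →
          ∀ ν : ℝ, 0 < ν →
            ‖(1 / ν) • ∑ j ∈ Finset.Icc (-((p : ℤ) / 2)) ((p : ℤ) / 2),
                  α j • h ((j : ℝ) * ν) - deriv h 0‖ ≤ c * C * ν ^ p := by
  obtain ⟨α, hα0, hαneg, hmom⟩ := exists_coeffs p hp hpeven
  set m : ℤ := (p:ℤ)/2 with hmdef
  set S : Finset ℤ := Finset.Icc (-m) m with hS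
  set c : ℝ := 1 + ∑ j ∈ S, |α j| * |(j:ℝ)|^(p+1) with hc
  have hc1 : (1:ℝ) ≤ c := by
    rw [hc]
    have : (0:ℝ) ≤ ∑ j ∈ S, |α j| * |(j:ℝ)|^(p+1) :=
      Finset.sum_nonneg fun j _ => by positivity
    linarith
  refine ⟨α, c, by linarith, hα0, fun j _ _ => hαneg j, ?_⟩
  intro d hd h C hdiff hlip ν hν
  have hC : 0 ≤ C := by
    have h1 := hlip 1 0
    have h0 : (0:ℝ) ≤ ‖iteratedDeriv p h 1 - iteratedDeriv p h 0‖ := norm_nonneg _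
    simp only [sub_zero, abs_one, mul_one] at h1
    linarith
  have htaylor := taylor_lip p h C hdiff hlip
  set T : ℕ → EuclideanSpace ℝ (Fin d) := fun i => iteratedDeriv i h 0 with hT
  set R : ℤ → EuclideanSpace ℝ (Fin d) :=
    fun j => h ((j:ℝ)*ν) - ∑ i ∈ range (p+1), (((j:ℝ)*ν)^i / i.factorial) • T i with hR
  have hRbound : ∀ j : ℤ, ‖R j‖ ≤ C * |(j:ℝ)|^(p+1) * ν^(p+1) := by
    intro j
    have := htaylor ((j:ℝ)*ν)
    rw [abs_mul, abs_of_pos hν, mul_pow] at this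
    calc ‖R j‖ ≤ C * (|(j:ℝ)|^(p+1) * ν^(p+1)) := this
      _ = C * |(j:ℝ)|^(p+1) * ν^(p+1) := by ring
  have key : ∑ j ∈ S, α j • h ((j:ℝ)*ν) = ν • T 1 + ∑ j ∈ S, α j • R j := by
    have h1 : ∀ j ∈ S, α j • h ((j:ℝ)*ν)
        = (∑ i ∈ range (p+1), (α j * (j:ℝ)^i) • ((ν^i / i.factorial) • T i)) + α j • R j := by
      intro j _
      have hsum : ∑ i ∈ range (p+1), (α j * (j:ℝ)^i) • ((ν^i / i.factorial) • T i)
          = α j • ∑ i ∈ range (p+1), (((j:ℝ)*ν)^i / i.factorial) • T i := by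
        rw [Finset.smul_sum]
        apply Finset.sum_congr rfl
        intro i _
        rw [smul_smul, smul_smul, mul_pow]
        congr 1
        ring
      rw [hR, hsum, smul_sub]
      abel
    rw [Finset.sum_congr rfl h1, Finset.sum_add_distrib]
    congr 1
    rw [Finset.sum_comm]
    have h2 : ∀ i ∈ range (p+1),
        ∑ j ∈ S, (α j * (j:ℝ)^i) • ((ν^i / i.factorial) • T i)
        = (if i = 1 then 1 else 0 : ℝ) • ((ν^i / i.factorial) • T i) := by
      intro i hi
      rw [← Finset.sum_smul, hmom i (by rw [Finset.mem_range] at hi; omega)]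
    rw [Finset.sum_congr rfl h2]
    have h3 : ∀ i ∈ range (p+1),
        (if i = 1 then 1 else 0 : ℝ) • ((ν^i / i.factorial) • T i)
        = if i = 1 then (ν^i / i.factorial) • T i else 0 := by
      intro i _
      by_cases hie : i = 1 <;> simp [hie]
    rw [Finset.sum_congr rfl h3, Finset.sum_ite_eq' (range (p+1)) 1]
    rw [if_pos (by rw [Finset.mem_range]; omega)]
    simp [Nat.factorial_one]
  have hν' : ν ≠ 0 := ne_of_gt hν
  have hfinal : (1 / ν) • ∑ j ∈ S, α j • h ((j:ℝ)*ν) - deriv h 0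
      = (1 / ν) • ∑ j ∈ S, α j • R j := by
    rw [key, smul_add, smul_smul]
    rw [show (1/ν) * ν = 1 by field_simp]
    rw [one_smul]
    have : T 1 = deriv h 0 := by rw [hT]; simp [iteratedDeriv_one]
    rw [this]
    abel
  rw [hfinal]
  rw [norm_smul]
  have hnorm : ‖∑ j ∈ S, α j • R j‖ ≤ ∑ j ∈ S, |α j| * (C * |(j:ℝ)|^(p+1) * ν^(p+1)) := by
    calc ‖∑ j ∈ S, α j • R j‖ ≤ ∑ j ∈ S, ‖α j • R j‖ := norm_sum_le _ _
      _ ≤ ∑ j ∈ S, |α j| * (C * |(j:ℝ)|^(p+1) * ν^(p+1)) := by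
        apply Finset.sum_le_sum
        intro j _
        rw [norm_smul, Real.norm_eq_abs]
        exact mul_le_mul_of_nonneg_left (hRbound j) (abs_nonneg _)
  have heq : ∑ j ∈ S, |α j| * (C * |(j:ℝ)|^(p+1) * ν^(p+1))
      = (∑ j ∈ S, |α j| * |(j:ℝ)|^(p+1)) * (C * ν^(p+1)) := by
    rw [Finset.sum_mul]
    apply Finset.sum_congr rfl
    intro j _
    ring
  have h1ν : ‖(1:ℝ)/ν‖ = 1/ν := by
    rw [Real.norm_eq_abs, abs_of_pos (by positivity)]
  rw [h1ν]
  calc (1/ν) * ‖∑ j ∈ S, α j • R j‖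
      ≤ (1/ν) * ((∑ j ∈ S, |α j| * |(j:ℝ)|^(p+1)) * (C * ν^(p+1))) := by
        rw [← heq]
        exact mul_le_mul_of_nonneg_left hnorm (by positivity)
    _ = (∑ j ∈ S, |α j| * |(j:ℝ)|^(p+1)) * C * ν^p := by
        field_simp
        ring
    _ ≤ c * C * ν^p := by
        have hs0 : (0:ℝ) ≤ ∑ j ∈ S, |α j| * |(j:ℝ)|^(p+1) :=
          Finset.sum_nonneg fun j _ => by positivity
        have hs : ∑ j ∈ S, |α j| * |(j:ℝ)|^(p+1) ≤ c := by rw [hc]; linarith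
        have hν0 : (0:ℝ) ≤ ν^p := by positivity
        exact mul_le_mul_of_nonneg_right (mul_le_mul_of_nonneg_right hs hC) hν0
end

section
/- Let g : ℝ^d → ℝ be differentiable and μ-strongly convex, i.e., g(y₂) ≥ g(y₁) + ⟨∇g(y₁), y₂ − y₁⟩ + (μ/2)‖y₁ − y₂‖² for all y₁, y₂, and let f : ℝ^d → ℝ be differentiable with L₁-Lipschitz gradient. Then for every ν ∈ ℝ with |ν|·L₁ ≤ μ/2, the perturbed function g_ν := ν f + g is (μ/2)-strongly convex. -/
open scoped RealInnerProductSpace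

lemma inner_gradient_eq {d : ℕ} (f : EuclideanSpace ℝ (Fin d) → ℝ)
    (x w : EuclideanSpace ℝ (Fin d)) :
    ⟪gradient f x, w⟫ = fderiv ℝ f x w := by
  unfold gradient
  exact InnerProductSpace.toDual_symm_apply

lemma taylor_bound {d : ℕ} (f : EuclideanSpace ℝ (Fin d) → ℝ) (L : ℝ) (hL : 0 ≤ L)
    (hf : Differentiable ℝ f)
    (hlip : ∀ u v, ‖gradient f u - gradient f v‖ ≤ L * ‖u - v‖)
    (x y : EuclideanSpace ℝ (Fin d)) :
    |f y - f x - ⟪gradient f x, y - x⟫| ≤ L / 2 * ‖y - x‖ ^ 2 := by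
  set v := y - x with hv
  have hgradcont : Continuous (gradient f) := by
    apply (LipschitzWith.of_dist_le_mul (K := L.toNNReal) ?_).continuous
    intro u w
    rw [dist_eq_norm, dist_eq_norm]
    exact (hlip u w).trans (by gcongr; exact Real.le_coe_toNNReal L)
  have hline : ∀ t : ℝ, HasDerivAt (fun s : ℝ => x + s • v) v t := fun t => by
    simpa using ((hasDerivAt_id t).smul_const v).const_add x
  have hderiv : ∀ t : ℝ, HasDerivAt (fun s : ℝ => f (x + s • v))
      ⟪gradient f (x + t • v), v⟫ t := by
    intro t
    rw [inner_gradient_eq]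
    exact (hf (x + t • v)).hasFDerivAt.comp_hasDerivAt t (hline t)
  have hcont : Continuous fun t : ℝ => ⟪gradient f (x + t • v), v⟫ :=
    (hgradcont.comp (continuous_const.add (continuous_id.smul continuous_const))).inner continuous_const
  have hint : ∫ t in (0:ℝ)..1, ⟪gradient f (x + t • v), v⟫ = f y - f x := by
    have := intervalIntegral.integral_eq_sub_of_hasDerivAt
      (f := fun s : ℝ => f (x + s • v)) (a := (0:ℝ)) (b := 1)
      (fun t _ => hderiv t) (hcont.intervalIntegrable 0 1)
    simpa [hv] using this
  have key : f y - f x - ⟪gradient f x, v⟫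
      = ∫ t in (0:ℝ)..1, ⟪gradient f (x + t • v) - gradient f x, v⟫ := by
    rw [show (fun t : ℝ => ⟪gradient f (x + t • v) - gradient f x, v⟫)
        = fun t : ℝ => ⟪gradient f (x + t • v), v⟫ - ⟪gradient f x, v⟫ from by
      ext t; rw [inner_sub_left]]
    rw [intervalIntegral.integral_sub (hcont.intervalIntegrable 0 1)
      (intervalIntegrable_const), hint]
    simp
  rw [key, ← Real.norm_eq_abs]
  have hbound : ∀ t ∈ Set.uIoc (0:ℝ) 1,
      ‖⟪gradient f (x + t • v) - gradient f x, v⟫‖ ≤ L * t * ‖v‖ ^ 2 := by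
    intro t ht
    rw [Set.uIoc_of_le zero_le_one, Set.mem_Ioc] at ht
    calc ‖⟪gradient f (x + t • v) - gradient f x, v⟫‖
        ≤ ‖gradient f (x + t • v) - gradient f x‖ * ‖v‖ := norm_inner_le_norm _ _
      _ ≤ (L * ‖(x + t • v) - x‖) * ‖v‖ := by gcongr; exact hlip _ _
      _ = L * t * ‖v‖ ^ 2 := by
          rw [add_sub_cancel_left, norm_smul, Real.norm_eq_abs, abs_of_pos ht.1]; ring
  have hIg : ∫ t in (0:ℝ)..1, L * t * ‖v‖ ^ 2 = L / 2 * ‖v‖ ^ 2 := by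
    rw [show (fun t : ℝ => L * t * ‖v‖ ^ 2) = fun t : ℝ => (L * ‖v‖ ^ 2) * t from by
      ext t; ring]
    rw [intervalIntegral.integral_const_mul, integral_id]
    ring
  calc ‖∫ t in (0:ℝ)..1, ⟪gradient f (x + t • v) - gradient f x, v⟫‖
      ≤ |∫ t in (0:ℝ)..1, L * t * ‖v‖ ^ 2| := by
        apply intervalIntegral.norm_integral_le_abs_of_norm_le ?_
          (((continuous_const.mul continuous_id).mul continuous_const).intervalIntegrable 0 1)
        filter_upwards [MeasureTheory.ae_restrict_mem measurableSet_uIoc] with t ht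
        exact hbound t ht
    _ = L / 2 * ‖v‖ ^ 2 := by
        rw [hIg, abs_of_nonneg (by positivity)]

/-- a small multiple of an L₁-smooth function added to a μ-strongly
convex function stays (μ/2)-strongly convex when |ν|·L₁ ≤ μ/2. -/
theorem stmt_8 {d : ℕ} (f g : EuclideanSpace ℝ (Fin d) → ℝ) (μ L₁ ν : ℝ)
    (hgdiff : Differentiable ℝ g)
    (hsc : ∀ y₁ y₂, g y₂ ≥ g y₁ + ⟪gradient g y₁, y₂ - y₁⟫ + μ / 2 * ‖y₁ - y₂‖ ^ 2)
    (hfdiff : Differentiable ℝ f)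
    (hflip : ∀ u v, ‖gradient f u - gradient f v‖ ≤ L₁ * ‖u - v‖)
    (hν : |ν| * L₁ ≤ μ / 2) :
    ∀ y₁ y₂, ν * f y₂ + g y₂
      ≥ ν * f y₁ + g y₁ + ⟪gradient (fun y => ν * f y + g y) y₁, y₂ - y₁⟫
        + (μ / 2) / 2 * ‖y₁ - y₂‖ ^ 2 := by
  intro y₁ y₂
  by_cases hL : 0 ≤ L₁
  · have hsum : ⟪gradient (fun y => ν * f y + g y) y₁, y₂ - y₁⟫
        = ν * ⟪gradient f y₁, y₂ - y₁⟫ + ⟪gradient g y₁, y₂ - y₁⟫ := by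
      rw [inner_gradient_eq, inner_gradient_eq, inner_gradient_eq]
      have hfd : fderiv ℝ (fun y => ν * f y + g y) y₁
          = ν • fderiv ℝ f y₁ + fderiv ℝ g y₁ := by
        rw [fderiv_fun_add ((hfdiff y₁).const_mul ν) (hgdiff y₁), fderiv_const_mul (hfdiff y₁)]
      rw [hfd]; simp
    have htay := taylor_bound f L₁ hL hfdiff hflip y₁ y₂
    have hgsc := hsc y₁ y₂
    have hnorm : ‖y₂ - y₁‖ = ‖y₁ - y₂‖ := norm_sub_rev _ _
    rw [hnorm] at htay
    have hs0 : (0:ℝ) ≤ ‖y₁ - y₂‖ ^ 2 := by positivity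
    have h3 : ν * (f y₂ - f y₁ - ⟪gradient f y₁, y₂ - y₁⟫)
        ≥ -(|ν| * |f y₂ - f y₁ - ⟪gradient f y₁, y₂ - y₁⟫|) := by
      rw [← abs_mul]; exact neg_abs_le _
    have h4 : |ν| * |f y₂ - f y₁ - ⟪gradient f y₁, y₂ - y₁⟫|
        ≤ |ν| * (L₁ / 2 * ‖y₁ - y₂‖ ^ 2) := by gcongr
    have h5 : |ν| * (L₁ / 2 * ‖y₁ - y₂‖ ^ 2) ≤ μ / 4 * ‖y₁ - y₂‖ ^ 2 := by
      nlinarith [abs_nonneg ν]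
    rw [hsum]
    nlinarith [h3, h4, h5, hgsc]
  · push_neg at hL
    have h0 := (norm_nonneg (gradient f y₁ - gradient f y₂)).trans (hflip y₁ y₂)
    have : ‖y₁ - y₂‖ = 0 := le_antisymm (nonpos_of_mul_nonneg_right h0 hL) (norm_nonneg _)
    have hy : y₂ = y₁ := by
      rw [norm_sub_eq_zero_iff] at this; rw [this]
    subst hy
    simp
end

section
/- Let f, g : ℝ^{d_x} × ℝ^{d_y} → ℝ be differentiable with ∇f and ∇g both L₁-Lipschitz jointly in (x, y), and let g be μ-strongly convex in y. Let 0 ≤ ν ≤ min{1, μ/(2L₁)} and let x₁, x₂ ∈ ℝ^{d_x}. If y₁ minimizes y ↦ ν f(x₁, y) + g(x₁, y) and y₂ minimizes y ↦ ν f(x₂, y) + g(x₂, y), then ‖y₁ − y₂‖ ≤ 4·(L₁/μ)·‖x₁ − x₂‖; that is, the perturbed lower-level solution map x ↦ y_ν*(x) is 4κ-Lipschitz where κ = L₁/μ. -/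
open scoped RealInnerProductSpace

/-- The joint variable (x, y) viewed as an element of ℝ^{dx} × ℝ^{dy} equipped with
the Euclidean (ℓ²) norm. -/
noncomputable def mk2 {dx dy : ℕ} (x : EuclideanSpace ℝ (Fin dx))
    (y : EuclideanSpace ℝ (Fin dy)) :
    WithLp 2 (EuclideanSpace ℝ (Fin dx) × EuclideanSpace ℝ (Fin dy)) :=
  (WithLp.equiv 2 _).symm (x, y)

variable {dx dy : ℕ}

noncomputable def inR : EuclideanSpace ℝ (Fin dy) →L[ℝ]
    WithLp 2 (EuclideanSpace ℝ (Fin dx) × EuclideanSpace ℝ (Fin dy)) :=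
  ((WithLp.prodContinuousLinearEquiv 2 ℝ _ _).symm : _ ≃L[ℝ] _).toContinuousLinearMap.comp
    (ContinuousLinearMap.inr ℝ _ _)

lemma inR_fst (y : EuclideanSpace ℝ (Fin dy)) : (inR (dx := dx) y).fst = 0 := rfl
lemma inR_snd (y : EuclideanSpace ℝ (Fin dy)) : (inR (dx := dx) y).snd = y := rfl

lemma mk2_eq (x : EuclideanSpace ℝ (Fin dx)) (y : EuclideanSpace ℝ (Fin dy)) :
    mk2 x y = mk2 x 0 + inR y := by
  have h : ∀ (a b : WithLp 2 (EuclideanSpace ℝ (Fin dx) × EuclideanSpace ℝ (Fin dy))),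
      a.fst = b.fst → a.snd = b.snd → a = b := fun a b h1 h2 => WithLp.ofLp_injective 2 (Prod.ext h1 h2)
  refine h _ _ ?_ ?_ <;>
    simp [mk2, WithLp.add_fst, WithLp.add_snd, inR_fst, inR_snd,
      WithLp.equiv_symm_apply, WithLp.toLp_fst, WithLp.toLp_snd]

lemma hasFDerivAt_mk2 (x : EuclideanSpace ℝ (Fin dx)) (y : EuclideanSpace ℝ (Fin dy)) :
    HasFDerivAt (fun y' => mk2 x y') (inR (dx := dx) (dy := dy)) y := by
  have h : (fun y' : EuclideanSpace ℝ (Fin dy) => mk2 x y') = fun y' => mk2 x 0 + inR y' := funext (mk2_eq x)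
  rw [h]
  exact (inR.hasFDerivAt).const_add _

lemma inner_gradient (φ : EuclideanSpace ℝ (Fin dy) → ℝ) (y v : EuclideanSpace ℝ (Fin dy)) :
    ⟪gradient φ y, v⟫ = fderiv ℝ φ y v := by
  rw [gradient]
  exact InnerProductSpace.toDual_symm_apply

lemma fderiv_slice (h : WithLp 2 (EuclideanSpace ℝ (Fin dx) × EuclideanSpace ℝ (Fin dy)) → ℝ)
    (hdiff : Differentiable ℝ h) (x : EuclideanSpace ℝ (Fin dx))
    (y v : EuclideanSpace ℝ (Fin dy)) :
    fderiv ℝ (fun y' => h (mk2 x y')) y v = ⟪(gradient h (mk2 x y)).snd, v⟫ := by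
  have hc : HasFDerivAt (fun y' => h (mk2 x y')) ((fderiv ℝ h (mk2 x y)).comp inR) y :=
    (hdiff (mk2 x y)).hasFDerivAt.comp y (hasFDerivAt_mk2 x y)
  rw [hc.fderiv]
  have h1 : fderiv ℝ h (mk2 x y) (inR v) = ⟪gradient h (mk2 x y), inR v⟫ := by
    rw [gradient]
    exact (InnerProductSpace.toDual_symm_apply).symm
  simp only [ContinuousLinearMap.coe_comp', Function.comp_apply, h1,
    WithLp.prod_inner_apply, WithLp.ofLp_fst, WithLp.ofLp_snd, inR_fst, inR_snd, inner_zero_right, zero_add]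

lemma gradient_slice (h : WithLp 2 (EuclideanSpace ℝ (Fin dx) × EuclideanSpace ℝ (Fin dy)) → ℝ)
    (hdiff : Differentiable ℝ h) (x : EuclideanSpace ℝ (Fin dx))
    (y : EuclideanSpace ℝ (Fin dy)) :
    gradient (fun y' => h (mk2 x y')) y = (gradient h (mk2 x y)).snd := by
  apply ext_inner_right ℝ
  intro v
  rw [inner_gradient, fderiv_slice h hdiff x y v]

lemma snd_norm_le' (q : WithLp 2 (EuclideanSpace ℝ (Fin dx) × EuclideanSpace ℝ (Fin dy))) :
    ‖q.snd‖ ≤ ‖q‖ := by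
  have h := WithLp.prod_norm_sq_eq_of_L2 q
  nlinarith [norm_nonneg q, norm_nonneg q.snd, norm_nonneg q.fst, sq_nonneg (‖q‖ - ‖q.snd‖)]

lemma norm_mk2_sub_snd (x : EuclideanSpace ℝ (Fin dx)) (y y' : EuclideanSpace ℝ (Fin dy)) :
    ‖mk2 x y - mk2 x y'‖ = ‖y - y'‖ := by
  have h := WithLp.prod_norm_sq_eq_of_L2 (mk2 x y - mk2 x y')
  have h1 : (mk2 x y - mk2 x y').fst = 0 := by
    simp [mk2, WithLp.sub_fst, WithLp.equiv_symm_apply, WithLp.toLp_fst]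
  have h2 : (mk2 x y - mk2 x y').snd = y - y' := by
    simp [mk2, WithLp.sub_snd, WithLp.equiv_symm_apply, WithLp.toLp_snd]
  rw [h1, h2] at h
  simp only [norm_zero, ne_eq, OfNat.ofNat_ne_zero, not_false_eq_true, zero_pow, zero_add] at h
  nlinarith [norm_nonneg (mk2 x y - mk2 x y'), norm_nonneg (y - y')]

lemma norm_mk2_sub_fst (x x' : EuclideanSpace ℝ (Fin dx)) (y : EuclideanSpace ℝ (Fin dy)) :
    ‖mk2 x y - mk2 x' y‖ = ‖x - x'‖ := by
  have h := WithLp.prod_norm_sq_eq_of_L2 (mk2 x y - mk2 x' y)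
  have h1 : (mk2 x y - mk2 x' y).fst = x - x' := by
    simp [mk2, WithLp.sub_fst, WithLp.equiv_symm_apply, WithLp.toLp_fst]
  have h2 : (mk2 x y - mk2 x' y).snd = 0 := by
    simp [mk2, WithLp.sub_snd, WithLp.equiv_symm_apply, WithLp.toLp_snd]
  rw [h1, h2] at h
  simp only [norm_zero, ne_eq, OfNat.ofNat_ne_zero, not_false_eq_true, zero_pow, add_zero] at h
  nlinarith [norm_nonneg (mk2 x y - mk2 x' y), norm_nonneg (x - x')]


set_option maxHeartbeats 1000000 in
/-- the perturbed lower-level solution map x ↦ y_ν*(x) is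
4κ-Lipschitz, κ = L₁/μ. -/
theorem stmt_10 {dx dy : ℕ}
    (f g : WithLp 2 (EuclideanSpace ℝ (Fin dx) × EuclideanSpace ℝ (Fin dy)) → ℝ)
    (μ L₁ ν : ℝ) (hμ : 0 < μ) (hL₁ : 0 < L₁)
    (hfdiff : Differentiable ℝ f) (hgdiff : Differentiable ℝ g)
    (hflip : ∀ p q, ‖gradient f p - gradient f q‖ ≤ L₁ * ‖p - q‖)
    (hglip : ∀ p q, ‖gradient g p - gradient g q‖ ≤ L₁ * ‖p - q‖)
    (hsc : ∀ x y₁ y₂, g (mk2 x y₂) ≥ g (mk2 x y₁)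
        + ⟪gradient (fun y => g (mk2 x y)) y₁, y₂ - y₁⟫ + μ / 2 * ‖y₁ - y₂‖ ^ 2)
    (hν0 : 0 ≤ ν) (hν1 : ν ≤ min 1 (μ / (2 * L₁)))
    (x₁ x₂ : EuclideanSpace ℝ (Fin dx)) (y₁ y₂ : EuclideanSpace ℝ (Fin dy))
    (hy₁ : ∀ y, ν * f (mk2 x₁ y₁) + g (mk2 x₁ y₁) ≤ ν * f (mk2 x₁ y) + g (mk2 x₁ y))
    (hy₂ : ∀ y, ν * f (mk2 x₂ y₂) + g (mk2 x₂ y₂) ≤ ν * f (mk2 x₂ y) + g (mk2 x₂ y)) :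
    ‖y₁ - y₂‖ ≤ 4 * (L₁ / μ) * ‖x₁ - x₂‖ := by
  -- ν bounds
  have hν1' : ν ≤ 1 := le_trans hν1 (min_le_left _ _)
  have hνμ : ν * L₁ ≤ μ / 2 := by
    have h := le_trans hν1 (min_le_right _ _)
    have h2 : ν * (2 * L₁) ≤ μ := (le_div_iff₀ (by positivity)).mp h
    nlinarith
  -- differentiability of the slices
  have hfs : ∀ (x : EuclideanSpace ℝ (Fin dx)), Differentiable ℝ (fun y => f (mk2 x y)) :=
    fun x y => ((hfdiff (mk2 x y)).hasFDerivAt.comp y (hasFDerivAt_mk2 x y)).differentiableAt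
  have hgs : ∀ (x : EuclideanSpace ℝ (Fin dx)), Differentiable ℝ (fun y => g (mk2 x y)) :=
    fun x y => ((hgdiff (mk2 x y)).hasFDerivAt.comp y (hasFDerivAt_mk2 x y)).differentiableAt
  -- stationarity at the two minimizers
  have stat : ∀ (x : EuclideanSpace ℝ (Fin dx)) (yy : EuclideanSpace ℝ (Fin dy)),
      (∀ y, ν * f (mk2 x yy) + g (mk2 x yy) ≤ ν * f (mk2 x y) + g (mk2 x y)) →
      ν • (gradient f (mk2 x yy)).snd + (gradient g (mk2 x yy)).snd = 0 := by
    intro x yy hmin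
    have hloc : IsLocalMin (fun y => ν * f (mk2 x y) + g (mk2 x y)) yy :=
      Filter.Eventually.of_forall hmin
    have hfd := hloc.fderiv_eq_zero
    apply ext_inner_right ℝ
    intro v
    have e1 : fderiv ℝ (fun y => ν * f (mk2 x y) + g (mk2 x y)) yy v
        = ν * fderiv ℝ (fun y => f (mk2 x y)) yy v + fderiv ℝ (fun y => g (mk2 x y)) yy v := by
      rw [fderiv_fun_add (((hfs x) yy).const_mul ν) ((hgs x) yy),
        fderiv_const_mul ((hfs x) yy) ν]
      simp
    rw [hfd] at e1
    simp only [ContinuousLinearMap.zero_apply] at e1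
    rw [inner_add_left, real_inner_smul_left, ← fderiv_slice f hfdiff x yy v,
      ← fderiv_slice g hgdiff x yy v, inner_zero_left]
    linarith
  have stat1 := stat x₁ y₁ hy₁
  have stat2 := stat x₂ y₂ hy₂
  set Gf11 := (gradient f (mk2 x₁ y₁)).snd with hGf11
  set Gf12 := (gradient f (mk2 x₁ y₂)).snd with hGf12
  set Gf22 := (gradient f (mk2 x₂ y₂)).snd with hGf22
  set Gg11 := (gradient g (mk2 x₁ y₁)).snd with hGg11
  set Gg12 := (gradient g (mk2 x₁ y₂)).snd with hGg12
  set Gg22 := (gradient g (mk2 x₂ y₂)).snd with hGg22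
  set Δ := y₂ - y₁ with hΔ
  -- strong monotonicity of g in y
  have hA := hsc x₁ y₁ y₂
  have hB := hsc x₁ y₂ y₁
  rw [gradient_slice g hgdiff x₁ y₁] at hA
  rw [gradient_slice g hgdiff x₁ y₂] at hB
  have key2 : ⟪Gg12 - Gg11, Δ⟫ ≥ μ * ‖Δ‖ ^ 2 := by
    have e2 : ⟪Gg12, y₁ - y₂⟫ = -⟪Gg12, Δ⟫ := by
      rw [hΔ, ← inner_neg_right, neg_sub]
    have e3 : ‖y₁ - y₂‖ = ‖Δ‖ := by rw [hΔ, norm_sub_rev]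
    have e4 : ‖y₂ - y₁‖ = ‖Δ‖ := rfl
    rw [inner_sub_left]
    rw [e3] at hA
    rw [e2, e4] at hB
    linarith
  -- Lipschitz bound for the f-part in y
  have keyf : ‖Gf12 - Gf11‖ ≤ L₁ * ‖Δ‖ := by
    have h1 := snd_norm_le' (gradient f (mk2 x₁ y₂) - gradient f (mk2 x₁ y₁))
    rw [WithLp.sub_snd] at h1
    have h2 := hflip (mk2 x₁ y₂) (mk2 x₁ y₁)
    rw [norm_mk2_sub_snd] at h2
    exact le_trans h1 h2
  have key3 : ⟪ν • (Gf12 - Gf11), Δ⟫ ≥ -(ν * L₁) * ‖Δ‖ ^ 2 := by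
    have h1 : |⟪Gf12 - Gf11, Δ⟫| ≤ ‖Gf12 - Gf11‖ * ‖Δ‖ := abs_real_inner_le_norm _ _
    have h2 := neg_abs_le ⟪Gf12 - Gf11, Δ⟫
    have h3 : ‖Gf12 - Gf11‖ * ‖Δ‖ ≤ L₁ * ‖Δ‖ * ‖Δ‖ :=
      mul_le_mul_of_nonneg_right keyf (norm_nonneg _)
    rw [real_inner_smul_left]
    nlinarith [norm_nonneg Δ]
  -- the cross-x Lipschitz bound
  set z := ν • Gf12 + Gg12 with hz
  have hzineq : ‖z‖ ≤ 2 * L₁ * ‖x₁ - x₂‖ := by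
    have hz2 : z = ν • (Gf12 - Gf22) + (Gg12 - Gg22) := by
      rw [hz, ← sub_eq_zero]
      rw [← stat2] at *
      module
    have hf' : ‖Gf12 - Gf22‖ ≤ L₁ * ‖x₁ - x₂‖ := by
      have h1 := snd_norm_le' (gradient f (mk2 x₁ y₂) - gradient f (mk2 x₂ y₂))
      rw [WithLp.sub_snd] at h1
      have h2 := hflip (mk2 x₁ y₂) (mk2 x₂ y₂)
      rw [norm_mk2_sub_fst] at h2
      exact le_trans h1 h2
    have hg' : ‖Gg12 - Gg22‖ ≤ L₁ * ‖x₁ - x₂‖ := by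
      have h1 := snd_norm_le' (gradient g (mk2 x₁ y₂) - gradient g (mk2 x₂ y₂))
      rw [WithLp.sub_snd] at h1
      have h2 := hglip (mk2 x₁ y₂) (mk2 x₂ y₂)
      rw [norm_mk2_sub_fst] at h2
      exact le_trans h1 h2
    calc ‖z‖ ≤ ‖ν • (Gf12 - Gf22)‖ + ‖Gg12 - Gg22‖ := by rw [hz2]; exact norm_add_le _ _
      _ = ν * ‖Gf12 - Gf22‖ + ‖Gg12 - Gg22‖ := by
          rw [norm_smul, Real.norm_eq_abs, abs_of_nonneg hν0]
      _ ≤ ν * (L₁ * ‖x₁ - x₂‖) + L₁ * ‖x₁ - x₂‖ :=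
          add_le_add (mul_le_mul_of_nonneg_left hf' hν0) hg'
      _ ≤ 2 * L₁ * ‖x₁ - x₂‖ := by nlinarith [mul_nonneg hL₁.le (norm_nonneg (x₁ - x₂))]
  -- lower bound on ⟪z, Δ⟫
  have hlow : ⟪z, Δ⟫ ≥ (μ - ν * L₁) * ‖Δ‖ ^ 2 := by
    have e : ⟪z, Δ⟫ = ⟪ν • (Gf12 - Gf11), Δ⟫ + ⟪Gg12 - Gg11, Δ⟫ := by
      rw [← inner_add_left]
      congr 1
      rw [hz, ← sub_eq_zero, ← stat1]
      module
    rw [e]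
    nlinarith
  have hup : ⟪z, Δ⟫ ≤ 2 * L₁ * ‖x₁ - x₂‖ * ‖Δ‖ :=
    le_trans (real_inner_le_norm _ _) (mul_le_mul_of_nonneg_right hzineq (norm_nonneg _))
  have hmain : (μ - ν * L₁) * ‖Δ‖ ^ 2 ≤ 2 * L₁ * ‖x₁ - x₂‖ * ‖Δ‖ := le_trans hlow hup
  have hΔnorm : ‖y₁ - y₂‖ = ‖Δ‖ := by rw [hΔ, norm_sub_rev]
  rw [hΔnorm]
  rcases eq_or_lt_of_le (norm_nonneg Δ) with h0 | h0
  · rw [← h0]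
    positivity
  · have h1 : μ * ‖Δ‖ ≤ 4 * L₁ * ‖x₁ - x₂‖ := by nlinarith
    rw [← sub_nonneg]
    have : 4 * (L₁ / μ) * ‖x₁ - x₂‖ - ‖Δ‖ = (4 * L₁ * ‖x₁ - x₂‖ - μ * ‖Δ‖) / μ := by
      field_simp
    rw [this]
    exact div_nonneg (by linarith) hμ.le
end

section
/- Let f, g : ℝ^{d_x} × ℝ^{d_y} → ℝ be differentiable, fix x ∈ ℝ^{d_x}, and let ν ↦ y_ν*(x) be a map from ℝ to ℝ^{d_y} that is differentiable at ν₀ and satisfies the first-order condition ν₀ ∇_y f(x, y_{ν₀}*(x)) + ∇_y g(x, y_{ν₀}*(x)) = 0. Define ℓ_ν(x) := ν f(x, y_ν*(x)) + g(x, y_ν*(x)). Then ν ↦ ℓ_ν(x) is differentiable at ν₀ with derivative (d/dν) ℓ_ν(x)|_{ν=ν₀} = f(x, y_{ν₀}*(x)). In particular, if y_0*(x) minimizes g(x, ·), then (d/dν) ℓ_ν(x)|_{ν=0} = f(x, y_0*(x)) = φ(x). -/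
/-- derivative of the perturbed value function ℓ_ν(x) in ν equals
f(x, y_ν*(x)) at ν₀, given the first-order optimality condition at ν₀. -/
theorem stmt_13 {dx dy : ℕ}
    (f g : EuclideanSpace ℝ (Fin dx) × EuclideanSpace ℝ (Fin dy) → ℝ)
    (hf : Differentiable ℝ f) (hg : Differentiable ℝ g)
    (x : EuclideanSpace ℝ (Fin dx)) (ystar : ℝ → EuclideanSpace ℝ (Fin dy)) (ν₀ : ℝ)
    (hy : DifferentiableAt ℝ ystar ν₀)
    (hfoc : ν₀ • gradient (fun y => f (x, y)) (ystar ν₀)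
        + gradient (fun y => g (x, y)) (ystar ν₀) = 0) :
    HasDerivAt (fun ν => ν * f (x, ystar ν) + g (x, ystar ν)) (f (x, ystar ν₀)) ν₀ := by
  set y₀ := ystar ν₀
  set y' := deriv ystar ν₀
  have hy' : HasDerivAt ystar y' ν₀ := hy.hasDerivAt
  have hpair : DifferentiableAt ℝ (fun y : EuclideanSpace ℝ (Fin dy) => (x, y)) y₀ :=
    DifferentiableAt.prodMk (differentiableAt_const x) differentiableAt_id
  have hdf : DifferentiableAt ℝ (fun y => f (x, y)) y₀ := (hf _).comp _ hpair
  have hdg : DifferentiableAt ℝ (fun y => g (x, y)) y₀ := (hg _).comp _ hpair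
  have hgf := hdf.hasGradientAt
  have hgg := hdg.hasGradientAt
  have hF : HasDerivAt (fun ν => f (x, ystar ν))
      (inner ℝ (gradient (fun y => f (x, y)) y₀) y' : ℝ) ν₀ := by
    have := hgf.hasFDerivAt.comp_hasDerivAt ν₀ hy'
    exact this
  have hG : HasDerivAt (fun ν => g (x, ystar ν))
      (inner ℝ (gradient (fun y => g (x, y)) y₀) y' : ℝ) ν₀ := by
    have := hgg.hasFDerivAt.comp_hasDerivAt ν₀ hy'
    exact this
  have h := ((hasDerivAt_id ν₀).mul hF).add hG
  have hzero : ν₀ * (inner ℝ (gradient (fun y => f (x, y)) y₀) y' : ℝ)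
      + (inner ℝ (gradient (fun y => g (x, y)) y₀) y' : ℝ) = 0 := by
    have := congrArg (fun v => (inner ℝ v y' : ℝ)) hfoc
    simpa [inner_add_left, real_inner_smul_left, Finset.mul_sum, mul_assoc] using this
  convert h using 1
  case e'_4 => rfl
  case e'_5 => rfl
  case e'_8 => rfl
  simp only [id_eq, one_mul]
  linarith
end

section
/- Let f : ℝ^d → ℝ be differentiable with L-Lipschitz gradient and with finite infimum f* := inf_{x ∈ ℝ^d} f(x) > −∞. Let η > 0, let T be a positive integer, and let x₀, …, x_T ∈ ℝ^d and F₀, …, F_{T−1} ∈ ℝ^d \ {0} satisfy the normalized gradient descent update x_{t+1} = x_t − η·F_t/‖F_t‖ for t = 0, …, T−1. Then (1/T)·Σ_{t=0}^{T−1} ‖∇f(x_t)‖ ≤ 3·(f(x₀) − f*)/(η·T) + 3·L·η/2 + (8/T)·Σ_{t=0}^{T−1} ‖F_t − ∇f(x_t)‖. -/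
open intervalIntegral in
private lemma descent_lemma {d : ℕ} (f : EuclideanSpace ℝ (Fin d) → ℝ) (L : ℝ)
    (hdiff : Differentiable ℝ f)
    (hlip : ∀ u v, ‖gradient f u - gradient f v‖ ≤ L * ‖u - v‖)
    (hL : 0 ≤ L) (x v : EuclideanSpace ℝ (Fin d)) :
    f (x + v) ≤ f x + (inner ℝ (gradient f x) v : ℝ) + L / 2 * ‖v‖ ^ 2 := by
  have hcurve : ∀ t : ℝ, HasDerivAt (fun s : ℝ => x + s • v) v t := by
    intro t
    simpa using ((hasDerivAt_id t).smul_const v).const_add x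
  have hderiv : ∀ t : ℝ, HasDerivAt (fun s : ℝ => f (x + s • v))
      ((inner ℝ (gradient f (x + t • v)) v : ℝ)) t := by
    intro t
    have h1 := (hdiff (x + t • v)).hasGradientAt
    have h2 := h1.hasFDerivAt.comp_hasDerivAt t (hcurve t)
    simpa [InnerProductSpace.toDual_apply_apply, Function.comp_def] using h2
  have hgradlip : LipschitzWith L.toNNReal (gradient f) := by
    apply LipschitzWith.of_dist_le_mul
    intro u w
    rw [dist_eq_norm, dist_eq_norm]
    simpa [Real.coe_toNNReal L hL] using hlip u w
  have hcont : Continuous fun t : ℝ => (inner ℝ (gradient f (x + t • v)) v : ℝ) := by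
    exact Continuous.inner (hgradlip.continuous.comp (by continuity)) continuous_const
  have hftc : ∫ t in (0:ℝ)..1, (inner ℝ (gradient f (x + t • v)) v : ℝ)
      = f (x + v) - f x := by
    rw [integral_eq_sub_of_hasDerivAt (fun t _ => hderiv t)
      (hcont.intervalIntegrable 0 1)]
    simp
  have hmono : ∫ t in (0:ℝ)..1, (inner ℝ (gradient f (x + t • v)) v : ℝ)
      ≤ ∫ t in (0:ℝ)..1, ((inner ℝ (gradient f x) v : ℝ) + L * ‖v‖ ^ 2 * t) := by
    apply integral_mono_on (by norm_num) (hcont.intervalIntegrable 0 1)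
      ((by continuity : Continuous fun t : ℝ => (inner ℝ (gradient f x) v : ℝ) + L * ‖v‖ ^ 2 * t).intervalIntegrable 0 1)
    intro t ht
    have ht0 : 0 ≤ t := ht.1
    have h3 : (inner ℝ (gradient f (x + t • v) - gradient f x) v : ℝ)
        ≤ ‖gradient f (x + t • v) - gradient f x‖ * ‖v‖ := real_inner_le_norm _ _
    have h4 : ‖gradient f (x + t • v) - gradient f x‖ ≤ L * (t * ‖v‖) := by
      have := hlip (x + t • v) x
      simpa [norm_smul, abs_of_nonneg ht0, mul_assoc] using this
    have h5 : (inner ℝ (gradient f (x + t • v)) v : ℝ)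
        = (inner ℝ (gradient f x) v : ℝ) + (inner ℝ (gradient f (x + t • v) - gradient f x) v : ℝ) := by
      rw [inner_sub_left]; ring
    rw [h5]
    nlinarith [mul_le_mul_of_nonneg_right h4 (norm_nonneg v), norm_nonneg v]
  have hval : ∫ t in (0:ℝ)..1, ((inner ℝ (gradient f x) v : ℝ) + L * ‖v‖ ^ 2 * t)
      = (inner ℝ (gradient f x) v : ℝ) + L / 2 * ‖v‖ ^ 2 := by
    rw [integral_add (intervalIntegrable_const)
      ((by continuity : Continuous fun t : ℝ => L * ‖v‖ ^ 2 * t).intervalIntegrable 0 1)]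
    rw [integral_const_mul, integral_id, integral_const]
    norm_num
    ring
  rw [hftc, hval] at hmono
  linarith

/-- pathwise descent guarantee for normalized gradient descent with
inexact gradient directions Fv. -/
theorem stmt_19 {d : ℕ} (f : EuclideanSpace ℝ (Fin d) → ℝ) (L fstar η : ℝ) (T : ℕ)
    (hdiff : Differentiable ℝ f)
    (hlip : ∀ u v, ‖gradient f u - gradient f v‖ ≤ L * ‖u - v‖)
    (hfs : IsGLB (Set.range f) fstar)
    (hη : 0 < η) (hT : 0 < T)
    (x Fv : ℕ → EuclideanSpace ℝ (Fin d))
    (hFne : ∀ t < T, Fv t ≠ 0)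
    (hupd : ∀ t < T, x (t + 1) = x t - (η / ‖Fv t‖) • Fv t) :
    (1 / (T : ℝ)) * ∑ t ∈ Finset.range T, ‖gradient f (x t)‖
      ≤ 3 * (f (x 0) - fstar) / (η * T) + 3 * L * η / 2
        + (8 / (T : ℝ)) * ∑ t ∈ Finset.range T, ‖Fv t - gradient f (x t)‖ := by
  have hTpos : (0:ℝ) < T := by exact_mod_cast hT
  have hnorm : ∀ t, t < T → ‖(η / ‖Fv t‖) • Fv t‖ = η := by
    intro t htT
    have hFpos : (0:ℝ) < ‖Fv t‖ := norm_pos_iff.mpr (hFne t htT)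
    rw [norm_smul, Real.norm_eq_abs, abs_of_pos (div_pos hη hFpos)]
    field_simp
  have hL : 0 ≤ L := by
    have h1 := hlip (x 0) (x 1)
    have h2 : x 0 - x 1 = (η / ‖Fv 0‖) • Fv 0 := by
      rw [hupd 0 hT, sub_sub_cancel]
    rw [h2, hnorm 0 hT] at h1
    nlinarith [norm_nonneg (gradient f (x 0) - gradient f (x 1))]
  have step : ∀ t, t < T → η * ‖gradient f (x t)‖
      ≤ f (x t) - f (x (t+1)) + 2*η*‖Fv t - gradient f (x t)‖ + L*η^2/2 := by
    intro t htT
    set g := gradient f (x t) with hg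
    set F := Fv t with hF
    have hFpos : (0:ℝ) < ‖F‖ := norm_pos_iff.mpr (hFne t htT)
    have hx1 : x (t+1) = x t + (-((η/‖F‖) • F)) := by
      rw [hupd t htT, sub_eq_add_neg]
    have hdes := descent_lemma f L hdiff hlip hL (x t) (-((η/‖F‖) • F))
    rw [← hx1] at hdes
    have hnv : ‖-((η/‖F‖) • F)‖ = η := by rw [norm_neg]; exact hnorm t htT
    rw [hnv] at hdes
    have hin : (inner ℝ g (-((η/‖F‖) • F)) : ℝ) = -((η/‖F‖) * inner ℝ g F) := by
      rw [inner_neg_right, real_inner_smul_right]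
    have hgF : (inner ℝ g F : ℝ) = ‖F‖^2 + inner ℝ (g - F) F := by
      rw [inner_sub_left, real_inner_self_eq_norm_sq]; ring
    have h6 : -(‖g - F‖ * ‖F‖) ≤ (inner ℝ (g - F) F : ℝ) := by
      have h := abs_real_inner_le_norm (g - F) F
      have h2 := neg_abs_le (inner ℝ (g - F) F : ℝ)
      linarith
    have hgle : ‖g‖ ≤ ‖F‖ + ‖g - F‖ := by
      calc ‖g‖ = ‖F + (g - F)‖ := by congr 1; abel
        _ ≤ ‖F‖ + ‖g - F‖ := norm_add_le _ _
    have hd : 0 < η/‖F‖ := div_pos hη hFpos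
    have e1 : (η/‖F‖) * ‖F‖^2 = η * ‖F‖ := by field_simp
    have e2 : (η/‖F‖) * (‖g - F‖ * ‖F‖) = η * ‖g - F‖ := by field_simp
    have hkey : (inner ℝ g (-((η/‖F‖) • F)) : ℝ) ≤ -(η*‖g‖) + 2*η*‖g - F‖ := by
      rw [hin, hgF]
      have hmul := mul_le_mul_of_nonneg_left h6 hd.le
      have expand : (η/‖F‖) * (‖F‖^2 + (inner ℝ (g - F) F : ℝ))
          = (η/‖F‖)*‖F‖^2 + (η/‖F‖)*(inner ℝ (g - F) F : ℝ) := mul_add _ _ _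
      have hgle' := mul_le_mul_of_nonneg_left hgle hη.le
      nlinarith
    have hswap : ‖F - g‖ = ‖g - F‖ := norm_sub_rev _ _
    rw [hswap]
    linarith
  have sum1 : ∑ t ∈ Finset.range T, (η * ‖gradient f (x t)‖)
      ≤ ∑ t ∈ Finset.range T,
        (f (x t) - f (x (t+1)) + 2*η*‖Fv t - gradient f (x t)‖ + L*η^2/2) :=
    Finset.sum_le_sum (fun t ht => step t (Finset.mem_range.mp ht))
  have sum2 : ∑ t ∈ Finset.range T,
        (f (x t) - f (x (t+1)) + 2*η*‖Fv t - gradient f (x t)‖ + L*η^2/2)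
      = (f (x 0) - f (x T)) + 2*η*(∑ t ∈ Finset.range T, ‖Fv t - gradient f (x t)‖)
        + T*(L*η^2/2) := by
    rw [Finset.sum_add_distrib, Finset.sum_add_distrib,
      Finset.sum_range_sub' (fun n => f (x n)), Finset.sum_const, ← Finset.mul_sum,
      nsmul_eq_mul, Finset.card_range]
  set S := ∑ t ∈ Finset.range T, ‖gradient f (x t)‖ with hS
  set E := ∑ t ∈ Finset.range T, ‖Fv t - gradient f (x t)‖ with hE
  have hlowT : fstar ≤ f (x T) := hfs.1 ⟨x T, rfl⟩
  have hlow0 : fstar ≤ f (x 0) := hfs.1 ⟨x 0, rfl⟩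
  have Enonneg : 0 ≤ E := Finset.sum_nonneg fun _ _ => norm_nonneg _
  have key : η * S ≤ (f (x 0) - fstar) + 2*η*E + T*(L*η^2/2) := by
    have hm : η * S = ∑ t ∈ Finset.range T, (η * ‖gradient f (x t)‖) :=
      Finset.mul_sum _ _ _
    rw [sum2] at sum1
    linarith [hm ▸ sum1]
  have hsub : (1/(T:ℝ))*S - (3*(f (x 0)-fstar)/(η*T) + 3*L*η/2 + (8/T)*E)
      = (η*S - (3*(f (x 0)-fstar) + (3/2)*L*η^2*T + 8*η*E)) / (η*T) := by
    field_simp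
  rw [← sub_nonpos, hsub]
  apply div_nonpos_of_nonpos_of_nonneg
  · have p1 : 0 ≤ L*η^2*T := mul_nonneg (mul_nonneg hL (sq_nonneg η)) hTpos.le
    have p2 : 0 ≤ η*E := mul_nonneg hη.le Enonneg
    linarith
  · positivity
end
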